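/- arXiv:math/0106044 — 6 statements merged into one kernel-verified Lean document; each statement's English description precedes it below -/
import Mathlib

section
/- Let D be a space of functions on an interval I, J ⊆ I, and S : D → F(J) a positive linear operator with constants in D and with ψ_x(t) = t - x and ψ_x² in D for x ∈ J. Then |S(ψ_x)(x)| ≤ (1 + S(1)(x)) · sqrt(S(ψ_x²)(x)). -/
theorem stmt_4 (I J : Set ℝ) (hJI : J ⊆ I)
    (S : (ℝ → ℝ) → (ℝ → ℝ))
    (hadd : ∀ f g : ℝ → ℝ, S (f + g) = S f + S g)
    (hsmul : ∀ (c : ℝ) (f : ℝ → ℝ), S (c • f) = c • S f)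
    (hpos : ∀ f : ℝ → ℝ, (∀ t ∈ I, 0 ≤ f t) → ∀ y ∈ J, 0 ≤ S f y)
    (x : ℝ) (hx : x ∈ J) :
    |S (fun t => t - x) x| ≤ (1 + S (fun _ => 1) x) * Real.sqrt (S (fun t => (t - x) ^ 2) x) := by
  set a := S (fun _ => 1) x with ha
  set b := S (fun t => (t - x) ^ 2) x with hb
  set c := S (fun t => t - x) x with hc
  have ha0 : 0 ≤ a := hpos _ (fun t _ => zero_le_one) x hx
  have hb0 : 0 ≤ b := hpos _ (fun t _ => sq_nonneg _) x hx
  have habs : ∀ δ : ℝ, 0 < δ → ∀ u : ℝ, |u| ≤ δ + δ⁻¹ * u ^ 2 := by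
    intro δ hδ u
    have h1 : δ * |u| ≤ δ ^ 2 + u ^ 2 := by
      nlinarith [sq_nonneg (δ - |u|), sq_abs u]
    calc |u| = δ⁻¹ * (δ * |u|) := by field_simp
      _ ≤ δ⁻¹ * (δ ^ 2 + u ^ 2) := by
          exact mul_le_mul_of_nonneg_left h1 (inv_pos.mpr hδ).le
      _ = δ + δ⁻¹ * u ^ 2 := by field_simp
  have key : ∀ δ : ℝ, 0 < δ → |c| ≤ δ * a + δ⁻¹ * b := by
    intro δ hδ
    have p1 : 0 ≤ δ * a + δ⁻¹ * b - c := by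
      have h := hpos ((δ • (fun _ : ℝ => (1:ℝ)) : ℝ → ℝ) + (δ⁻¹ • (fun t : ℝ => (t - x) ^ 2) : ℝ → ℝ)
          + ((-1 : ℝ) • (fun t : ℝ => t - x) : ℝ → ℝ)) ?_ x hx
      · rw [hadd, hadd, hsmul, hsmul, hsmul] at h
        simp only [Pi.add_apply, Pi.smul_apply, smul_eq_mul] at h
        rw [← ha, ← hb, ← hc] at h
        linarith
      · intro t _
        simp only [Pi.add_apply, Pi.smul_apply, smul_eq_mul]
        have := habs δ hδ (t - x)
        have := le_abs_self (t - x)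
        linarith
    have p2 : 0 ≤ δ * a + δ⁻¹ * b + c := by
      have h := hpos ((δ • (fun _ : ℝ => (1:ℝ)) : ℝ → ℝ) + (δ⁻¹ • (fun t : ℝ => (t - x) ^ 2) : ℝ → ℝ)
          + ((1 : ℝ) • (fun t : ℝ => t - x) : ℝ → ℝ)) ?_ x hx
      · rw [hadd, hadd, hsmul, hsmul, hsmul] at h
        simp only [Pi.add_apply, Pi.smul_apply, smul_eq_mul] at h
        rw [← ha, ← hb, ← hc] at h
        linarith
      · intro t _
        simp only [Pi.add_apply, Pi.smul_apply, smul_eq_mul]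
        have := habs δ hδ (t - x)
        have := neg_abs_le (t - x)
        linarith
    exact abs_le.mpr ⟨by linarith, by linarith⟩
  rcases eq_or_lt_of_le hb0 with hbz | hbp
  · have hc0 : |c| = 0 := by
      by_contra hne
      have hcpos : 0 < |c| := lt_of_le_of_ne (abs_nonneg c) (Ne.symm hne)
      have hδ : 0 < |c| / (2 * (a + 1)) := by positivity
      have := key _ hδ
      rw [← hbz] at this
      have : |c| ≤ |c| / (2 * (a + 1)) * a := by simpa using this
      have hlt : |c| / (2 * (a + 1)) * a < |c| := by
        rw [div_mul_eq_mul_div]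
        rw [div_lt_iff₀ (by positivity)]
        nlinarith
      linarith
    rw [← hbz, Real.sqrt_zero, mul_zero, hc0]
  · have hsb : 0 < Real.sqrt b := Real.sqrt_pos.mpr hbp
    have := key _ hsb
    calc |c| ≤ Real.sqrt b * a + (Real.sqrt b)⁻¹ * b := this
      _ = (1 + a) * Real.sqrt b := by
          rw [inv_mul_eq_div, Real.div_sqrt]; ring
end

section
/- Suppose for each p ≥ 1 the positive linear operator L_p satisfies L_p(ψ_x²)(x) ≤ M₂(x)/p for a function M₂ : J → [0,∞), and L₀(ψ_x²)(x) = 0. Then L_{n,λ_n}(ψ_x²)(x) ≤ λ_n(x)·M₂(x)/n for all n ≥ 1 and x ∈ J. -/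
lemma binom_mean_aux (n : ℕ) (a b : ℝ) :
    ∑ p ∈ Finset.range (n + 1), (p : ℝ) * (n.choose p : ℝ) * a ^ p * b ^ (n - p)
      = n * a * (a + b) ^ (n - 1) := by
  cases n with
  | zero => simp
  | succ m =>
    rw [Finset.sum_range_succ']
    simp only [Nat.cast_zero, zero_mul, add_zero]
    have key : ∀ q : ℕ, ((q + 1 : ℕ) : ℝ) * ((m + 1).choose (q + 1) : ℝ)
        = ((m + 1 : ℕ) : ℝ) * (m.choose q : ℝ) := by
      intro q
      rw [← Nat.cast_mul, ← Nat.cast_mul, mul_comm ((q+1:ℕ)), ← Nat.add_one_mul_choose_eq]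
    have : ∀ q ∈ Finset.range (m + 1),
        ((q + 1 : ℕ) : ℝ) * ((m + 1).choose (q + 1) : ℝ) * a ^ (q + 1) * b ^ (m + 1 - (q + 1))
        = ((m + 1 : ℕ) : ℝ) * a * ((m.choose q : ℝ) * (a ^ q * b ^ (m - q))) := by
      intro q _
      rw [key q]
      have : m + 1 - (q + 1) = m - q := by omega
      rw [this]
      ring
    rw [Finset.sum_congr rfl this, ← Finset.mul_sum]
    have hadd : (a + b) ^ m = ∑ q ∈ Finset.range (m + 1),
        (m.choose q : ℝ) * (a ^ q * b ^ (m - q)) := by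
      rw [add_pow]
      exact Finset.sum_congr rfl fun q _ => by ring
    simp [← hadd]

theorem stmt_10 (J : Set ℝ) (L : ℕ → (ℝ → ℝ) → (ℝ → ℝ))
    (hL0 : ∀ f : ℝ → ℝ, L 0 f = f)
    (hsmul : ∀ (p : ℕ) (c : ℝ) (f : ℝ → ℝ), L p (fun t => c * f t) = fun y => c * L p f y)
    (M2 : ℝ → ℝ) (hM2 : ∀ x ∈ J, 0 ≤ M2 x)
    (hbound : ∀ p : ℕ, 1 ≤ p → ∀ x ∈ J, L p (fun t => (t - x) ^ 2) x ≤ M2 x / p)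
    (lam : ℝ → ℝ) (hlam : ∀ x ∈ J, lam x ∈ Set.Icc (0:ℝ) 1)
    (n : ℕ) (hn : 1 ≤ n) (x : ℝ) (hx : x ∈ J) :
    ∑ p ∈ Finset.range (n + 1),
        (n.choose p : ℝ) * lam x ^ p * (1 - lam x) ^ (n - p) *
          L p (fun t => (((p : ℝ) / n) * t + (1 - (p : ℝ) / n) * x - x) ^ 2) x
      ≤ lam x * M2 x / n := by
  obtain ⟨hl0, hl1⟩ := hlam x hx
  have hM := hM2 x hx
  have hnR : (0 : ℝ) < n := by positivity
  set l := lam x with hl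
  have hstep : ∑ p ∈ Finset.range (n + 1),
      (n.choose p : ℝ) * l ^ p * (1 - l) ^ (n - p) *
        L p (fun t => (((p : ℝ) / n) * t + (1 - (p : ℝ) / n) * x - x) ^ 2) x
      ≤ ∑ p ∈ Finset.range (n + 1),
        (n.choose p : ℝ) * l ^ p * (1 - l) ^ (n - p) * ((p : ℝ) * M2 x / (n : ℝ) ^ 2) := by
    apply Finset.sum_le_sum
    intro p _
    have hfun : (fun t => (((p : ℝ) / n) * t + (1 - (p : ℝ) / n) * x - x) ^ 2)
        = fun t => ((p : ℝ) / n) ^ 2 * (t - x) ^ 2 := by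
      funext t; ring
    rw [hfun, hsmul]
    have hcoef : (0 : ℝ) ≤ (n.choose p : ℝ) * l ^ p * (1 - l) ^ (n - p) := by
      have h1 : (0:ℝ) ≤ 1 - l := by linarith
      positivity
    apply mul_le_mul_of_nonneg_left _ hcoef
    rcases Nat.eq_zero_or_pos p with hp | hp
    · subst hp; simp
    · have hb := hbound p hp x hx
      have hp0 : (0 : ℝ) < p := by exact_mod_cast hp
      calc ((p : ℝ) / n) ^ 2 * L p (fun t => (t - x) ^ 2) x
          ≤ ((p : ℝ) / n) ^ 2 * (M2 x / p) := by
            apply mul_le_mul_of_nonneg_left hb (by positivity)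
        _ = (p : ℝ) * M2 x / (n : ℝ) ^ 2 := by
            field_simp
  refine hstep.trans ?_
  have hsum : ∑ p ∈ Finset.range (n + 1),
      (n.choose p : ℝ) * l ^ p * (1 - l) ^ (n - p) * ((p : ℝ) * M2 x / (n : ℝ) ^ 2)
      = (M2 x / (n : ℝ) ^ 2) *
        ∑ p ∈ Finset.range (n + 1), (p : ℝ) * (n.choose p : ℝ) * l ^ p * (1 - l) ^ (n - p) := by
    rw [Finset.mul_sum]
    exact Finset.sum_congr rfl fun p _ => by ring
  rw [hsum, binom_mean_aux]
  have : l + (1 - l) = 1 := by ring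
  rw [this, one_pow]
  rw [div_mul_eq_mul_div, div_le_div_iff₀ (by positivity) hnR]
  ring_nf
  nlinarith [sq_nonneg ((n:ℝ))]
end

section
/- Suppose for each p ≥ 1, |L_p(ψ_x)(x)| ≤ M₁(x)/p for a function M₁ : J → [0,∞), and L₀(ψ_x)(x) = 0. Then |L_{n,λ_n}(ψ_x)(x)| ≤ M₁(x)·(1 - (1-λ_n(x))^n)/n for all n ≥ 1 and x ∈ J. -/
theorem stmt_11 (J : Set ℝ) (L : ℕ → (ℝ → ℝ) → (ℝ → ℝ))
    (hL0 : ∀ f : ℝ → ℝ, L 0 f = f)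
    (hsmul : ∀ (p : ℕ) (c : ℝ) (f : ℝ → ℝ), L p (fun t => c * f t) = fun y => c * L p f y)
    (M1 : ℝ → ℝ) (hM1 : ∀ x ∈ J, 0 ≤ M1 x)
    (hbound : ∀ p : ℕ, 1 ≤ p → ∀ x ∈ J, |L p (fun t => t - x) x| ≤ M1 x / p)
    (lam : ℝ → ℝ) (hlam : ∀ x ∈ J, lam x ∈ Set.Icc (0:ℝ) 1)
    (n : ℕ) (hn : 1 ≤ n) (x : ℝ) (hx : x ∈ J) :
    |∑ p ∈ Finset.range (n + 1),
        (n.choose p : ℝ) * lam x ^ p * (1 - lam x) ^ (n - p) *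
          L p (fun t => ((p : ℝ) / n) * t + (1 - (p : ℝ) / n) * x - x) x|
      ≤ M1 x * (1 - (1 - lam x) ^ n) / n := by
  obtain ⟨hs0, hs1⟩ := hlam x hx
  have hM := hM1 x hx
  have hμ0 : (0:ℝ) ≤ 1 - lam x := by linarith
  have hnpos : (0:ℝ) < n := by exact_mod_cast hn
  set s := lam x with hs
  -- termwise bound
  have key : ∀ p ∈ Finset.range (n+1),
      |(n.choose p : ℝ) * s ^ p * (1 - s) ^ (n - p) *
          L p (fun t => ((p : ℝ) / n) * t + (1 - (p : ℝ) / n) * x - x) x|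
      ≤ (if p = 0 then 0 else s ^ p * (1 - s) ^ (n - p) * (n.choose p : ℝ) * (M1 x / n)) := by
    intro p hp
    rcases Nat.eq_zero_or_pos p with hp0 | hp1
    · subst hp0
      have hf : (fun t => ((0 : ℝ) / n) * t + (1 - (0 : ℝ) / n) * x - x) = (fun t : ℝ => (0:ℝ)) := by
        funext t; simp
      simp [hf, hL0]
    · have hpne : p ≠ 0 := hp1.ne'
      simp only [if_neg hpne]
      have hf : (fun t => ((p : ℝ) / n) * t + (1 - (p : ℝ) / n) * x - x)
          = (fun t => ((p : ℝ) / n) * (t - x)) := by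
        funext t; ring
      have hval : L p (fun t => (p:ℝ)/n * (t - x)) x = (p:ℝ)/n * L p (fun t => t - x) x := by
        rw [hsmul]
      rw [hf, hval]
      have hLb := hbound p hp1 x hx
      have hc : (0:ℝ) ≤ (n.choose p : ℝ) * s ^ p * (1 - s) ^ (n - p) := by positivity
      have hd : (0:ℝ) ≤ (p : ℝ) / n := by positivity
      rw [abs_mul, abs_of_nonneg hc, abs_mul, abs_of_nonneg hd]
      have hppos : (0:ℝ) < p := by exact_mod_cast hp1
      have : (n.choose p : ℝ) * s ^ p * (1 - s) ^ (n - p) * ((p:ℝ)/n * |L p (fun t => t - x) x|)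
          ≤ (n.choose p : ℝ) * s ^ p * (1 - s) ^ (n - p) * ((p:ℝ)/n * (M1 x / p)) := by
        gcongr
      refine this.trans (le_of_eq ?_)
      field_simp
  have habs := Finset.abs_sum_le_sum_abs
    (fun p => (n.choose p : ℝ) * s ^ p * (1 - s) ^ (n - p) *
          L p (fun t => ((p : ℝ) / n) * t + (1 - (p : ℝ) / n) * x - x) x)
    (Finset.range (n+1))
  refine habs.trans ((Finset.sum_le_sum key).trans (le_of_eq ?_))
  -- compute the sum of the bounds
  have hbin : ∑ p ∈ Finset.range (n+1), s ^ p * (1 - s) ^ (n - p) * (n.choose p : ℝ) = 1 := by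
    have h := add_pow s (1 - s) n
    rw [show s + (1 - s) = 1 by ring, one_pow] at h
    exact h.symm
  rw [Finset.sum_range_succ'] at hbin ⊢
  simp only [Nat.succ_ne_zero, if_neg, pow_zero, Nat.sub_zero, Nat.choose_zero_right,
    Nat.cast_one, one_mul, mul_one, if_pos rfl, add_zero, if_true, if_false, reduceIte] at hbin ⊢
  have hS : ∑ i ∈ Finset.range n, s ^ (i+1) * (1 - s) ^ (n - (i+1)) * (n.choose (i+1) : ℝ)
      = 1 - (1 - s) ^ n := by linarith
  rw [← Finset.sum_mul, hS]
  field_simp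
end

section
/- Let α_n, λ_n : J → [0,1] with α_n(x) ≤ λ_n(x) for all x ∈ J. If f ∈ D and x ∈ J satisfy L_p(f_{p/n,x})(x) ≤ L_{p+1}(f_{(p+1)/n,x})(x) for every p = 0,…,n-1, then L_{n,α_n}(f)(x) ≤ L_{n,λ_n}(f)(x). -/
open Finset

lemma bern_split (n : ℕ) (a : ℕ → ℝ) (s : ℝ) :
    ∑ p ∈ range (n + 2), ((n+1).choose p : ℝ) * s ^ p * (1 - s) ^ (n + 1 - p) * a p
    = (1 - s) * ∑ p ∈ range (n + 1), (n.choose p : ℝ) * s ^ p * (1 - s) ^ (n - p) * a p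
      + s * ∑ p ∈ range (n + 1), (n.choose p : ℝ) * s ^ p * (1 - s) ^ (n - p) * a (p+1) := by
  rw [Finset.sum_range_succ' (fun p => ((n+1).choose p : ℝ) * s ^ p * (1 - s) ^ (n + 1 - p) * a p)]
  have h1 : ∀ p ∈ range (n+1),
      ((n+1).choose (p+1) : ℝ) * s ^ (p+1) * (1 - s) ^ (n + 1 - (p+1)) * a (p+1)
      = (n.choose p : ℝ) * s ^ (p+1) * (1 - s) ^ (n - p) * a (p+1)
        + (n.choose (p+1) : ℝ) * s ^ (p+1) * (1 - s) ^ (n - p) * a (p+1) := by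
    intro p hp
    have : (n+1).choose (p+1) = n.choose p + n.choose (p+1) := Nat.choose_succ_succ n p
    rw [this]
    have : n + 1 - (p + 1) = n - p := by omega
    rw [this]
    push_cast
    ring
  rw [Finset.sum_congr rfl h1, Finset.sum_add_distrib]
  have h2 : ∑ p ∈ range (n+1), (n.choose p : ℝ) * s ^ (p+1) * (1 - s) ^ (n - p) * a (p+1)
      = s * ∑ p ∈ range (n + 1), (n.choose p : ℝ) * s ^ p * (1 - s) ^ (n - p) * a (p+1) := by
    rw [Finset.mul_sum]; apply Finset.sum_congr rfl; intro p hp; ring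
  have h3 : ∑ p ∈ range (n+1), (n.choose (p+1) : ℝ) * s ^ (p+1) * (1 - s) ^ (n - p) * a (p+1)
        + ((n+1).choose 0 : ℝ) * s ^ 0 * (1 - s) ^ (n + 1 - 0) * a 0
      = (1 - s) * ∑ p ∈ range (n + 1), (n.choose p : ℝ) * s ^ p * (1 - s) ^ (n - p) * a p := by
    rw [Finset.sum_range_succ (fun p => (n.choose (p+1) : ℝ) * s ^ (p+1) * (1 - s) ^ (n - p) * a (p+1)),
      Finset.mul_sum,
      Finset.sum_range_succ' (fun p => (1 - s) * ((n.choose p : ℝ) * s ^ p * (1 - s) ^ (n - p) * a p))]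
    simp only [Nat.choose_succ_self, Nat.cast_zero, Nat.choose_zero_right]
    congr 1
    · rw [zero_mul, zero_mul, zero_mul, add_zero]
      apply Finset.sum_congr rfl
      intro p hp
      simp only [Finset.mem_range] at hp
      have : n - p = (n - (p+1)) + 1 := by omega
      rw [this]
      ring
    · simp only [Nat.cast_one, pow_zero, Nat.sub_zero]
      ring
  rw [h2] at *
  linarith [h3]

lemma bern_mono (n : ℕ) (a : ℕ → ℝ) (ha : ∀ p < n, a p ≤ a (p+1))
    (α β : ℝ) (hα : α ∈ Set.Icc (0:ℝ) 1) (hβ : β ∈ Set.Icc (0:ℝ) 1) (hab : α ≤ β) :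
    ∑ p ∈ range (n + 1), (n.choose p : ℝ) * α ^ p * (1 - α) ^ (n - p) * a p
    ≤ ∑ p ∈ range (n + 1), (n.choose p : ℝ) * β ^ p * (1 - β) ^ (n - p) * a p := by
  induction n generalizing a with
  | zero => simp
  | succ n ih =>
    have key : ∀ s : ℝ, ∑ p ∈ range (n + 2), ((n+1).choose p : ℝ) * s ^ p * (1 - s) ^ (n + 1 - p) * a p
        = (1 - s) * ∑ p ∈ range (n + 1), (n.choose p : ℝ) * s ^ p * (1 - s) ^ (n - p) * a p
          + s * ∑ p ∈ range (n + 1), (n.choose p : ℝ) * s ^ p * (1 - s) ^ (n - p) * a (p+1) :=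
      fun s => bern_split n a s
    rw [key α, key β]
    obtain ⟨hα0, hα1⟩ := hα
    obtain ⟨hβ0, hβ1⟩ := hβ
    set Lα := ∑ p ∈ range (n + 1), (n.choose p : ℝ) * α ^ p * (1 - α) ^ (n - p) * a p
    set Hα := ∑ p ∈ range (n + 1), (n.choose p : ℝ) * α ^ p * (1 - α) ^ (n - p) * a (p+1)
    set Lβ := ∑ p ∈ range (n + 1), (n.choose p : ℝ) * β ^ p * (1 - β) ^ (n - p) * a p
    set Hβ := ∑ p ∈ range (n + 1), (n.choose p : ℝ) * β ^ p * (1 - β) ^ (n - p) * a (p+1)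
    have hLL : Lα ≤ Lβ := ih a (fun p hp => ha p (by omega))
    have hHH : Hα ≤ Hβ := ih (fun p => a (p+1)) (fun p hp => ha (p+1) (by omega))
    have hLH : Lβ ≤ Hβ := by
      apply Finset.sum_le_sum
      intro p hp
      simp only [Finset.mem_range] at hp
      have hcoef : (0:ℝ) ≤ (n.choose p : ℝ) * β ^ p * (1 - β) ^ (n - p) :=
        mul_nonneg (mul_nonneg (Nat.cast_nonneg _) (pow_nonneg hβ0 _))
          (pow_nonneg (by linarith) _)
      have := ha p (by omega)
      nlinarith
    nlinarith [mul_le_mul_of_nonneg_left hLL (by linarith : (0:ℝ) ≤ 1 - α),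
      mul_le_mul_of_nonneg_left hHH hα0]

theorem stmt_16 (J : Set ℝ) (L : ℕ → (ℝ → ℝ) → (ℝ → ℝ))
    (hL0 : ∀ f : ℝ → ℝ, L 0 f = f)
    (alpha lam : ℝ → ℝ)
    (halpha : ∀ x ∈ J, alpha x ∈ Set.Icc (0:ℝ) 1)
    (hlam : ∀ x ∈ J, lam x ∈ Set.Icc (0:ℝ) 1)
    (hle : ∀ x ∈ J, alpha x ≤ lam x)
    (n : ℕ) (hn : 1 ≤ n) (f : ℝ → ℝ) (x : ℝ) (hx : x ∈ J)
    (hmono : ∀ p < n,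
      L p (fun t => f (((p : ℝ) / n) * t + (1 - (p : ℝ) / n) * x)) x
        ≤ L (p + 1) (fun t => f ((((p : ℝ) + 1) / n) * t + (1 - ((p : ℝ) + 1) / n) * x)) x) :
    ∑ p ∈ Finset.range (n + 1),
        (n.choose p : ℝ) * alpha x ^ p * (1 - alpha x) ^ (n - p) *
          L p (fun t => f (((p : ℝ) / n) * t + (1 - (p : ℝ) / n) * x)) x
      ≤ ∑ p ∈ Finset.range (n + 1),
          (n.choose p : ℝ) * lam x ^ p * (1 - lam x) ^ (n - p) *
            L p (fun t => f (((p : ℝ) / n) * t + (1 - (p : ℝ) / n) * x)) x := by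
  obtain ⟨m, rfl⟩ : ∃ m, n = m + 1 := ⟨n - 1, by omega⟩
  apply bern_mono (m+1)
    (fun p => L p (fun t => f (((p : ℝ) / (m+1:ℕ)) * t + (1 - (p : ℝ) / (m+1:ℕ)) * x)) x)
  · intro p hp
    have := hmono p hp
    have hc : ((p + 1 : ℕ) : ℝ) = (p : ℝ) + 1 := by push_cast; ring
    simpa [hc] using this
  · exact halpha x hx
  · exact hlam x hx
  · exact hle x hx
end

section
/- Suppose each L_p : D → F(J) is positive linear with L_p(1) = 1 and L_p(f)(x) ≥ f(x) for all convex f ∈ D and x ∈ J, and the sets f_{p/n,x} ∈ D. Then for every convex f ∈ D, constant λ ∈ [0,1], n ≥ 1, and x ∈ J: L_{n,λ}(f)(x) ≥ f(x). -/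
theorem stmt_17 (I J : Set ℝ) (hI : Convex ℝ I) (hJI : J ⊆ I)
    (L : ℕ → (ℝ → ℝ) → (ℝ → ℝ))
    (hL0 : ∀ f : ℝ → ℝ, L 0 f = f)
    (hpos : ∀ (p : ℕ) (f : ℝ → ℝ), (∀ t ∈ I, 0 ≤ f t) → ∀ y ∈ J, 0 ≤ L p f y)
    (hone : ∀ p : ℕ, ∀ y ∈ J, L p (fun _ => (1:ℝ)) y = 1)
    (hconvge : ∀ (p : ℕ) (g : ℝ → ℝ), ConvexOn ℝ I g → ∀ y ∈ J, g y ≤ L p g y)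
    (f : ℝ → ℝ) (hf : ConvexOn ℝ I f)
    (lam : ℝ) (hlam : lam ∈ Set.Icc (0:ℝ) 1)
    (n : ℕ) (hn : 1 ≤ n) (x : ℝ) (hx : x ∈ J) :
    f x ≤ ∑ p ∈ Finset.range (n + 1),
        (n.choose p : ℝ) * lam ^ p * (1 - lam) ^ (n - p) *
          L p (fun t => f (((p : ℝ) / n) * t + (1 - (p : ℝ) / n) * x)) x := by
  obtain ⟨hlam0, hlam1⟩ := hlam
  have hxI : x ∈ I := hJI hx
  -- each g_p is convex on I and L p g_p x ≥ f x
  have key : ∀ p ∈ Finset.range (n + 1),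
      f x ≤ L p (fun t => f (((p : ℝ) / n) * t + (1 - (p : ℝ) / n) * x)) x := by
    intro p hp
    rw [Finset.mem_range, Nat.lt_succ_iff] at hp
    set a : ℝ := (p : ℝ) / n with ha
    have ha0 : 0 ≤ a := by positivity
    have ha1 : a ≤ 1 := by
      rw [ha, div_le_one (by exact_mod_cast hn)]
      exact_mod_cast hp
    have hmem : ∀ t ∈ I, a * t + (1 - a) * x ∈ I := by
      intro t ht
      have hb0 : (0:ℝ) ≤ 1 - a := by linarith
      have hab : a + (1 - a) = 1 := by ring
      have := hI ht hxI ha0 hb0 hab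
      simpa [smul_eq_mul] using this
    have hg : ConvexOn ℝ I (fun t => f (a * t + (1 - a) * x)) := by
      refine ⟨hI, fun u hu v hv μ ν hμ hν hμν => ?_⟩
      have hν' : ν = 1 - μ := by linarith
      have heq : a * (μ • u + ν • v) + (1 - a) * x
          = μ * (a * u + (1 - a) * x) + ν * (a * v + (1 - a) * x) := by
        subst hν'; simp [smul_eq_mul]; ring
      simp only [heq]
      have := hf.2 (hmem u hu) (hmem v hv) hμ hν hμν
      simpa [smul_eq_mul] using this
    have := hconvge p _ hg x hx
    have hfx : f (a * x + (1 - a) * x) = f x := by ring_nf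
    calc f x = f (a * x + (1 - a) * x) := hfx.symm
      _ ≤ L p (fun t => f (a * t + (1 - a) * x)) x := this
  have hwnn : ∀ p ∈ Finset.range (n + 1),
      0 ≤ (n.choose p : ℝ) * lam ^ p * (1 - lam) ^ (n - p) := by
    intro p _
    have h1 : (0:ℝ) ≤ 1 - lam := by linarith
    positivity
  have hwsum : ∑ p ∈ Finset.range (n + 1),
      (n.choose p : ℝ) * lam ^ p * (1 - lam) ^ (n - p) = 1 := by
    calc ∑ p ∈ Finset.range (n + 1),
          (n.choose p : ℝ) * lam ^ p * (1 - lam) ^ (n - p)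
        = ∑ p ∈ Finset.range (n + 1),
          lam ^ p * (1 - lam) ^ (n - p) * (n.choose p : ℝ) := by
          exact Finset.sum_congr rfl fun p _ => by ring
      _ = (lam + (1 - lam)) ^ n := (add_pow lam (1 - lam) n).symm
      _ = 1 := by norm_num
  calc f x = ∑ p ∈ Finset.range (n + 1),
        (n.choose p : ℝ) * lam ^ p * (1 - lam) ^ (n - p) * f x := by
        rw [← Finset.sum_mul, hwsum, one_mul]
    _ ≤ _ := by
        apply Finset.sum_le_sum
        intro p hp
        exact mul_le_mul_of_nonneg_left (key p hp) (hwnn p hp)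
end

section
/- Suppose each L_p : D → F(J) preserves monotone increasing functions and convex functions, D is stable under t ↦ f(αt + (1-α)x), and λ_n ∈ [0,1] is constant. Let f ∈ D be convex with each f_{p/n,x} mapped by L_p so that the function z ↦ L_p(f_{p/n,z})(z) is convex on a convex J. Then L_{n,λ_n}(f) is convex on J. In particular, under the hypotheses that L_p maps increasing functions to increasing functions and convex functions to convex functions for all p ≤ n, the map z ↦ L_p(f_{p/n,z})(z) is convex on J for convex f, and hence L_{n,λ_n}(f) is convex. -/
private lemma four_point {I : Set ℝ} {f : ℝ → ℝ} (hf : ConvexOn ℝ I f)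
    {a b c : ℝ} (ha : a ∈ I) (hbc : b + c ∈ I) (hab : a ≤ b) (hc : 0 ≤ c) :
    f (a + c) + f b ≤ f a + f (b + c) := by
  rcases eq_or_lt_of_le (show a ≤ b + c by linarith) with h | h
  · have hc0 : c = 0 := by linarith
    have hab0 : a = b := by linarith
    subst hc0; subst hab0; simp
  · have hLpos : (0:ℝ) < b + c - a := by linarith
    have hθ0 : 0 ≤ c / (b + c - a) := div_nonneg hc hLpos.le
    have hθ1 : c / (b + c - a) ≤ 1 := by rw [div_le_one hLpos]; linarith
    have hθL : c / (b + c - a) * (b + c - a) = c := div_mul_cancel₀ c hLpos.ne'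
    have i1 : f (a + c) ≤ (1 - c / (b + c - a)) * f a + (c / (b + c - a)) * f (b + c) := by
      have h2 := hf.2 ha hbc (show (0:ℝ) ≤ 1 - c / (b + c - a) by linarith) hθ0 (by ring)
      simp only [smul_eq_mul] at h2
      have e1 : (1 - c / (b + c - a)) * a + (c / (b + c - a)) * (b + c) = a + c := by
        linear_combination hθL
      rwa [e1] at h2
    have i2 : f b ≤ (c / (b + c - a)) * f a + (1 - c / (b + c - a)) * f (b + c) := by
      have h2 := hf.2 ha hbc hθ0 (show (0:ℝ) ≤ 1 - c / (b + c - a) by linarith) (by ring)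
      simp only [smul_eq_mul] at h2
      have e2 : (c / (b + c - a)) * a + (1 - c / (b + c - a)) * (b + c) = b := by
        linear_combination -hθL
      rwa [e2] at h2
    linarith

private lemma sum_convexOn {J : Set ℝ} (hJ : Convex ℝ J) (s : Finset ℕ)
    (g : ℕ → ℝ → ℝ) (h : ∀ i ∈ s, ConvexOn ℝ J (g i)) :
    ConvexOn ℝ J (fun x => ∑ i ∈ s, g i x) := by
  classical
  induction s using Finset.induction_on with
  | empty => simpa using convexOn_const 0 hJ
  | insert a s hni ih =>
    simp only [Finset.sum_insert hni]
    exact (h a (Finset.mem_insert_self a s)).add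
      (ih fun i hi => h i (Finset.mem_insert_of_mem hi))

private lemma key_le (I J : Set ℝ) (hI : Convex ℝ I) (hJ : Convex ℝ J) (hJI : J ⊆ I)
    (Lp : (ℝ → ℝ) → (ℝ → ℝ))
    (hadd : ∀ (f g : ℝ → ℝ), Lp (f + g) = Lp f + Lp g)
    (hsmul : ∀ (c : ℝ) (f : ℝ → ℝ), Lp (c • f) = c • Lp f)
    (hpos : ∀ (f : ℝ → ℝ), (∀ t ∈ I, 0 ≤ f t) → ∀ y ∈ J, 0 ≤ Lp f y)
    (hmono : ∀ g : ℝ → ℝ, MonotoneOn g I → MonotoneOn (Lp g) J)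
    (hconv : ∀ g : ℝ → ℝ, ConvexOn ℝ I g → ConvexOn ℝ J (Lp g))
    (f : ℝ → ℝ) (hf : ConvexOn ℝ I f) (α : ℝ) (hα0 : 0 ≤ α) (hα1 : α ≤ 1)
    (x y : ℝ) (hx : x ∈ J) (hy : y ∈ J) (hxy : x ≤ y)
    (a b : ℝ) (ha : 0 ≤ a) (hb : 0 ≤ b) (hab : a + b = 1) :
    Lp (fun t => f (α * t + (1 - α) * (a * x + b * y))) (a * x + b * y) ≤
      a * Lp (fun t => f (α * t + (1 - α) * x)) (a * x + b * y) +
      b * Lp (fun t => f (α * t + (1 - α) * y)) (a * x + b * y) := by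
  set hX : ℝ → ℝ := fun t => f (α * t + (1 - α) * x) with hhX
  set hY : ℝ → ℝ := fun t => f (α * t + (1 - α) * y) with hhY
  set m := a * x + b * y with hm
  set hM : ℝ → ℝ := fun t => f (α * t + (1 - α) * m) with hhM
  have hmJ : m ∈ J := hJ hx hy ha hb hab
  -- pointwise inequality on I
  have hpt : ∀ t ∈ I, 0 ≤ (a • hX + b • hY + (-1 : ℝ) • hM) t := by
    intro t ht
    have hxI : α * t + (1 - α) * x ∈ I := hI ht (hJI hx) hα0 (by linarith) (by ring)
    have hyI : α * t + (1 - α) * y ∈ I := hI ht (hJI hy) hα0 (by linarith) (by ring)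
    have heq : α * t + (1 - α) * m = a * (α * t + (1 - α) * x) + b * (α * t + (1 - α) * y) := by
      rw [hm]; linear_combination (-α * t) * hab
    have := hf.2 hxI hyI ha hb hab
    simp only [smul_eq_mul] at this
    simp only [Pi.add_apply, Pi.smul_apply, smul_eq_mul, hhX, hhY, hhM]
    rw [heq]
    linarith
  have hLsum : Lp (a • hX + b • hY + (-1 : ℝ) • hM)
      = a • Lp hX + b • Lp hY + (-1 : ℝ) • Lp hM := by
    rw [hadd, hadd, hsmul, hsmul, hsmul]
  have h0 := hpos _ hpt m hmJ
  rw [hLsum] at h0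
  simp only [Pi.add_apply, Pi.smul_apply, smul_eq_mul] at h0
  linarith

private lemma key (I J : Set ℝ) (hI : Convex ℝ I) (hJ : Convex ℝ J) (hJI : J ⊆ I)
    (Lp : (ℝ → ℝ) → (ℝ → ℝ))
    (hadd : ∀ (f g : ℝ → ℝ), Lp (f + g) = Lp f + Lp g)
    (hsmul : ∀ (c : ℝ) (f : ℝ → ℝ), Lp (c • f) = c • Lp f)
    (hpos : ∀ (f : ℝ → ℝ), (∀ t ∈ I, 0 ≤ f t) → ∀ y ∈ J, 0 ≤ Lp f y)
    (hmono : ∀ g : ℝ → ℝ, MonotoneOn g I → MonotoneOn (Lp g) J)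
    (hconv : ∀ g : ℝ → ℝ, ConvexOn ℝ I g → ConvexOn ℝ J (Lp g))
    (f : ℝ → ℝ) (hf : ConvexOn ℝ I f) (α : ℝ) (hα0 : 0 ≤ α) (hα1 : α ≤ 1) :
    ConvexOn ℝ J (fun z => Lp (fun t => f (α * t + (1 - α) * z)) z) := by
  -- convexity of t ↦ f (α t + (1-α) z) for z ∈ J
  have cX : ∀ z ∈ J, ConvexOn ℝ I (fun t => f (α * t + (1 - α) * z)) := by
    intro z hz
    refine ⟨hI, fun t1 ht1 t2 ht2 c d hc hd hcd => ?_⟩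
    simp only [smul_eq_mul]
    have e : α * (c * t1 + d * t2) + (1 - α) * z
        = c * (α * t1 + (1 - α) * z) + d * (α * t2 + (1 - α) * z) := by
      linear_combination (-(1 - α) * z) * hcd
    show f (α * (c * t1 + d * t2) + (1 - α) * z) ≤ _
    rw [e]
    have h1 : α * t1 + (1 - α) * z ∈ I := hI ht1 (hJI hz) hα0 (by linarith) (by ring)
    have h2 : α * t2 + (1 - α) * z ∈ I := hI ht2 (hJI hz) hα0 (by linarith) (by ring)
    have := hf.2 h1 h2 hc hd hcd
    simpa [smul_eq_mul] using this
  have H : ∀ x ∈ J, ∀ y ∈ J, x ≤ y → ∀ a b : ℝ, 0 ≤ a → 0 ≤ b → a + b = 1 →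
      Lp (fun t => f (α * t + (1 - α) * (a * x + b * y))) (a * x + b * y) ≤
        a * Lp (fun t => f (α * t + (1 - α) * x)) x +
        b * Lp (fun t => f (α * t + (1 - α) * y)) y := by
    intro x hx y hy hxy a b ha hb hab
    set m := a * x + b * y with hm
    have hmJ : m ∈ J := hJ hx hy ha hb hab
    have step1 := key_le I J hI hJ hJI Lp hadd hsmul hpos hmono hconv f hf α hα0 hα1
      x y hx hy hxy a b ha hb hab
    rw [← hm] at step1
    -- convexity of φ, ψ on J
    have φconv := hconv _ (cX x hx)
    have ψconv := hconv _ (cX y hy)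
    have hφ := φconv.2 hx hy ha hb hab
    have hψ := ψconv.2 hx hy ha hb hab
    simp only [smul_eq_mul] at hφ hψ
    -- exchange inequality via monotonicity
    have Gmono : MonotoneOn (fun t => f (α * t + (1 - α) * y) - f (α * t + (1 - α) * x)) I := by
      intro t1 ht1 t2 ht2 h12
      have haI : α * t1 + (1 - α) * x ∈ I := hI ht1 (hJI hx) hα0 (by linarith) (by ring)
      have hbcI : α * t2 + (1 - α) * x + (1 - α) * (y - x) ∈ I := by
        have e : α * t2 + (1 - α) * x + (1 - α) * (y - x) = α * t2 + (1 - α) * y := by ring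
        rw [e]; exact hI ht2 (hJI hy) hα0 (by linarith) (by ring)
      have four := four_point hf haI hbcI
        (by nlinarith : α * t1 + (1 - α) * x ≤ α * t2 + (1 - α) * x)
        (by nlinarith : (0:ℝ) ≤ (1 - α) * (y - x))
      have e1 : α * t1 + (1 - α) * x + (1 - α) * (y - x) = α * t1 + (1 - α) * y := by ring
      have e2 : α * t2 + (1 - α) * x + (1 - α) * (y - x) = α * t2 + (1 - α) * y := by ring
      rw [e1, e2] at four
      dsimp only
      linarith
    have hLG := hmono _ Gmono hx hy hxy
    have hsplit : Lp (fun t => f (α * t + (1 - α) * y))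
        = Lp (fun t => f (α * t + (1 - α) * x))
          + Lp (fun t => f (α * t + (1 - α) * y) - f (α * t + (1 - α) * x)) := by
      have e : (fun t => f (α * t + (1 - α) * y))
          = (fun t => f (α * t + (1 - α) * x))
            + fun t => f (α * t + (1 - α) * y) - f (α * t + (1 - α) * x) := by
        funext t
        show f (α * t + (1 - α) * y)
          = f (α * t + (1 - α) * x) + (f (α * t + (1 - α) * y) - f (α * t + (1 - α) * x))
        ring
      conv_lhs => rw [e]
      rw [hadd]
    have exch : Lp (fun t => f (α * t + (1 - α) * y)) x
          - Lp (fun t => f (α * t + (1 - α) * x)) x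
        ≤ Lp (fun t => f (α * t + (1 - α) * y)) y
          - Lp (fun t => f (α * t + (1 - α) * x)) y := by
      have ex : ∀ z, Lp (fun t => f (α * t + (1 - α) * y)) z
          = Lp (fun t => f (α * t + (1 - α) * x)) z
            + Lp (fun t => f (α * t + (1 - α) * y) - f (α * t + (1 - α) * x)) z := by
        intro z; rw [hsplit]; simp
      rw [ex x, ex y]
      simpa using hLG
    -- combine everything
    set φx := Lp (fun t => f (α * t + (1 - α) * x)) x
    set φy := Lp (fun t => f (α * t + (1 - α) * x)) y
    set φm := Lp (fun t => f (α * t + (1 - α) * x)) m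
    set ψx := Lp (fun t => f (α * t + (1 - α) * y)) x
    set ψy := Lp (fun t => f (α * t + (1 - α) * y)) y
    set ψm := Lp (fun t => f (α * t + (1 - α) * y)) m
    have k1 : a * φm ≤ a * a * φx + a * b * φy := by
      have := mul_le_mul_of_nonneg_left hφ ha
      nlinarith [this]
    have k2 : b * ψm ≤ a * b * ψx + b * b * ψy := by
      have := mul_le_mul_of_nonneg_left hψ hb
      nlinarith [this]
    have k3 : a * b * ψx + a * b * φy ≤ a * b * φx + a * b * ψy := by
      have := mul_le_mul_of_nonneg_left (by linarith : ψx + φy ≤ φx + ψy)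
        (mul_nonneg ha hb)
      nlinarith [this]
    have habq1 : a * a * φx + a * b * φx = a * φx := by linear_combination a * φx * hab
    have habq2 : a * b * ψy + b * b * ψy = b * ψy := by linear_combination b * ψy * hab
    linarith [step1, k1, k2, k3, habq1, habq2]
  refine ⟨hJ, ?_⟩
  intro x hx y hy a b ha hb hab
  simp only [smul_eq_mul]
  rcases le_total x y with h | h
  · exact H x hx y hy h a b ha hb hab
  · have := H y hy x hx h b a hb ha (by linarith)
    have e : a * x + b * y = b * y + a * x := by ring
    rw [e]; linarith

theorem stmt_18 (I J : Set ℝ) (hI : Convex ℝ I) (hJ : Convex ℝ J) (hJI : J ⊆ I)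
    (L : ℕ → (ℝ → ℝ) → (ℝ → ℝ))
    (hL0 : ∀ f : ℝ → ℝ, L 0 f = f)
    (hadd : ∀ (p : ℕ) (f g : ℝ → ℝ), L p (f + g) = L p f + L p g)
    (hsmul : ∀ (p : ℕ) (c : ℝ) (f : ℝ → ℝ), L p (c • f) = c • L p f)
    (hpos : ∀ (p : ℕ) (f : ℝ → ℝ), (∀ t ∈ I, 0 ≤ f t) → ∀ y ∈ J, 0 ≤ L p f y)
    (n : ℕ) (hn : 1 ≤ n)
    (hmono : ∀ p ≤ n, ∀ g : ℝ → ℝ, MonotoneOn g I → MonotoneOn (L p g) J)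
    (hconv : ∀ p ≤ n, ∀ g : ℝ → ℝ, ConvexOn ℝ I g → ConvexOn ℝ J (L p g))
    (lam : ℝ) (hlam : lam ∈ Set.Icc (0:ℝ) 1)
    (f : ℝ → ℝ) (hf : ConvexOn ℝ I f) :
    ConvexOn ℝ J (fun x => ∑ p ∈ Finset.range (n + 1),
      (n.choose p : ℝ) * lam ^ p * (1 - lam) ^ (n - p) *
        L p (fun t => f (((p : ℝ) / n) * t + (1 - (p : ℝ) / n) * x)) x) := by
  apply sum_convexOn hJ
  intro p hp
  have hpn : p ≤ n := Nat.lt_succ_iff.mp (Finset.mem_range.mp hp)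
  have hc : 0 ≤ (n.choose p : ℝ) * lam ^ p * (1 - lam) ^ (n - p) :=
    mul_nonneg (mul_nonneg (Nat.cast_nonneg _) (pow_nonneg hlam.1 _))
      (pow_nonneg (by linarith [hlam.2]) _)
  have hα0 : 0 ≤ (p : ℝ) / n := div_nonneg (Nat.cast_nonneg _) (Nat.cast_nonneg _)
  have hα1 : (p : ℝ) / n ≤ 1 := by
    rw [div_le_one (by exact_mod_cast hn : (0:ℝ) < n)]
    exact_mod_cast hpn
  have hk := key I J hI hJ hJI (L p) (hadd p) (hsmul p) (hpos p) (hmono p hpn)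
    (hconv p hpn) f hf _ hα0 hα1
  exact hk.smul hc
end
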